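/- Let X be a finite type and let f : Finset X → ℝ be monotone. If y, y' : X → [0,1] satisfy y_j ≤ y'_j for every j ∈ X, then the multilinear extensions satisfy F(y) ≤ F(y'). -/

import Mathlib

open Finset

/-- The multilinear extension `F(y)` of a set function `f`. -/
noncomputable def mlext {X : Type*} [Fintype X] [DecidableEq X]
    (f : Finset X → ℝ) (y : X → ℝ) : ℝ :=
  ∑ R : Finset X, f R * ((∏ j ∈ R, y j) * ∏ j ∈ Rᶜ, (1 - y j))

lemma mlext_split {X : Type*} [Fintype X] [DecidableEq X]
    (f : Finset X → ℝ) (w : X → ℝ) (i : X) :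
    mlext f w = ∑ S ∈ (univ : Finset (Finset X)).filter (fun R => i ∉ R),
      (f (insert i S) * w i + f S * (1 - w i)) *
        ((∏ j ∈ S, w j) * ∏ j ∈ Sᶜ.erase i, (1 - w j)) := by
  classical
  unfold mlext
  rw [← Finset.sum_filter_add_sum_filter_not univ (fun R => i ∈ R)]
  have h1 : ∑ R ∈ (univ : Finset (Finset X)).filter (fun R => i ∈ R),
      f R * ((∏ j ∈ R, w j) * ∏ j ∈ Rᶜ, (1 - w j))
      = ∑ S ∈ (univ : Finset (Finset X)).filter (fun R => i ∉ R),
      f (insert i S) * ((w i * ∏ j ∈ S, w j) * ∏ j ∈ Sᶜ.erase i, (1 - w j)) := by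
    apply Finset.sum_nbij' (fun R => R.erase i) (fun S => insert i S)
    · intro a ha
      simp only [mem_filter, mem_univ, true_and] at ha ⊢
      exact notMem_erase i a
    · intro a ha
      simp only [mem_filter, mem_univ, true_and] at ha ⊢
      exact mem_insert_self i a
    · intro a ha
      simp only [mem_filter, mem_univ, true_and] at ha
      exact Finset.insert_erase ha
    · intro a ha
      simp only [mem_filter, mem_univ, true_and] at ha
      exact Finset.erase_insert ha
    · intro a ha
      simp only [mem_filter, mem_univ, true_and] at ha
      have h2 : insert i (a.erase i) = a := Finset.insert_erase ha
      rw [h2]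
      congr 1
      rw [← Finset.mul_prod_erase a w ha, Finset.compl_erase,
        Finset.erase_insert (by simp [ha])]
  rw [h1, ← Finset.sum_add_distrib]
  apply Finset.sum_congr rfl
  intro S hS
  simp only [mem_filter, mem_univ, true_and] at hS
  have hic : i ∈ Sᶜ := Finset.mem_compl.2 hS
  have h4 : ∏ j ∈ Sᶜ, (1 - w j) = (1 - w i) * ∏ j ∈ Sᶜ.erase i, (1 - w j) :=
    (Finset.mul_prod_erase Sᶜ _ hic).symm
  rw [h4]
  ring

lemma mlext_single {X : Type*} [Fintype X] [DecidableEq X]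
    (f : Finset X → ℝ)
    (hmono : ∀ S T : Finset X, S ⊆ T → f S ≤ f T)
    (i : X) (w w' : X → ℝ)
    (hw : ∀ j, 0 ≤ w j ∧ w j ≤ 1)
    (hww' : ∀ j, j ≠ i → w j = w' j)
    (hi : w i ≤ w' i) :
    mlext f w ≤ mlext f w' := by
  classical
  rw [mlext_split f w i, mlext_split f w' i]
  apply Finset.sum_le_sum
  intro S hS
  simp only [mem_filter, mem_univ, true_and] at hS
  have hP1 : ∏ j ∈ S, w j = ∏ j ∈ S, w' j :=
    Finset.prod_congr rfl fun j hj => hww' j (fun h => hS (h ▸ hj))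
  have hP2 : ∏ j ∈ Sᶜ.erase i, (1 - w j) = ∏ j ∈ Sᶜ.erase i, (1 - w' j) :=
    Finset.prod_congr rfl fun j hj => by rw [hww' j (Finset.ne_of_mem_erase hj)]
  rw [← hP1, ← hP2]
  have hPnn : 0 ≤ (∏ j ∈ S, w j) * ∏ j ∈ Sᶜ.erase i, (1 - w j) := by
    apply mul_nonneg
    · exact Finset.prod_nonneg fun j _ => (hw j).1
    · exact Finset.prod_nonneg fun j _ => by linarith [(hw j).2]
  apply mul_le_mul_of_nonneg_right _ hPnn
  have hf : f S ≤ f (insert i S) := hmono _ _ (Finset.subset_insert i S)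
  nlinarith

/-- The multilinear extension of a monotone set function is monotone
in the sampling probabilities: `y ≤ y'` pointwise implies `F(y) ≤ F(y')`. -/
theorem mlext_monotone
    {X : Type*} [Fintype X] [DecidableEq X]
    (f : Finset X → ℝ)
    (hmono : ∀ S T : Finset X, S ⊆ T → f S ≤ f T)
    (y y' : X → ℝ)
    (hy : ∀ j : X, y j ∈ Set.Icc (0 : ℝ) 1)
    (hy' : ∀ j : X, y' j ∈ Set.Icc (0 : ℝ) 1)
    (hle : ∀ j : X, y j ≤ y' j) :
    mlext f y ≤ mlext f y' := by
  classical
  set z : Finset X → X → ℝ := fun s j => if j ∈ s then y' j else y j with hz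
  have hzIcc : ∀ s j, 0 ≤ z s j ∧ z s j ≤ 1 := by
    intro s j
    simp only [hz]
    split
    · exact ⟨(hy' j).1, (hy' j).2⟩
    · exact ⟨(hy j).1, (hy j).2⟩
  have key : ∀ s : Finset X, mlext f y ≤ mlext f (z s) := by
    intro s
    induction s using Finset.induction_on with
    | empty =>
      have : z ∅ = y := by funext j; simp [hz]
      rw [this]
    | @insert i s hni ih =>
      refine le_trans ih (mlext_single f hmono i (z s) (z (insert i s))
        (hzIcc s) ?_ ?_)
      · intro j hj
        simp only [hz, Finset.mem_insert]
        rcases Decidable.em (j ∈ s) with h | h <;> simp [h, hj]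
      · simp only [hz, Finset.mem_insert]
        simp [hni, hle i]
  have : z Finset.univ = y' := by funext j; simp [hz]
  simpa [this] using key Finset.univ
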